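/- Let D ∈ Mat_N be a nonzero trace-free anti-hermitian matrix with exactly k distinct eigenvalues, and suppose D is not similar to −D. Then the number of equivalence classes of the relation ~_D on the set of nonzero row vectors of ℂ^N equals 2^k − 1. -/

import Mathlib

open Matrix Finset

/-- The relation `~_D` on nonzero row vectors of `ℂ^N`: `v ~_D v'` iff there are `U ∈ GL(N,ℂ)`,
`μ ∈ ℝ∖{0}` and `x ∈ ℂ∖{0}` with `D = μ U⁻¹ D U` and `v' = μ x (v U)`. Its classes are the
isomorphism classes of real calculi `(Mat_N, ⟨∂⟩_D, ℂ^N, φ)`. -/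
def simRel {N : ℕ} (D : Matrix (Fin N) (Fin N) ℂ)
    (v w : {v : Fin N → ℂ // v ≠ 0}) : Prop :=
  ∃ (U : GL (Fin N) ℂ) (μ : ℝ) (x : ℂ), μ ≠ 0 ∧ x ≠ 0 ∧
    D = (μ : ℂ) • ((U⁻¹).val * D * U.val) ∧
    (w : Fin N → ℂ) = ((μ : ℂ) * x) • Matrix.vecMul (v : Fin N → ℂ) U.val

variable {N : ℕ}

/-- Matrix equal to the identity except that row `p` is `a`. -/
def rowRep (p : Fin N) (a : Fin N → ℂ) : Matrix (Fin N) (Fin N) ℂ :=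
  Matrix.of fun i j => if i = p then a j else if i = j then 1 else 0

lemma vecMul_rowRep (x a : Fin N → ℂ) (p : Fin N) :
    Matrix.vecMul x (rowRep p a) = fun j => x p * a j + if j = p then 0 else x j := by
  funext j
  simp only [Matrix.vecMul, dotProduct, rowRep, Matrix.of_apply]
  have key : ∀ i ∈ Finset.univ, x i * (if i = p then a j else if i = j then 1 else 0)
      = (if i = p then x p * a j else 0) + (if i = j ∧ i ≠ p then x j else 0) := by
    intro i _
    rcases eq_or_ne i p with h1 | h1
    · subst h1; simp
    · rcases eq_or_ne i j with h2 | h2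
      · subst h2; simp [h1]
      · simp [h1, h2]
  rw [Finset.sum_congr rfl key, Finset.sum_add_distrib]
  congr 1
  · simp
  · rcases eq_or_ne j p with h | h
    · subst h; simp
    · have : ∀ i, (if i = j ∧ i ≠ p then x j else 0) = (if i = j then x j else 0) := by
        intro i
        rcases eq_or_ne i j with h2 | h2
        · subst h2; simp [h]
        · simp [h2]
      simp only [this]
      simp [h]

lemma single_one_vecMul' (i : Fin N) (A : Matrix (Fin N) (Fin N) ℂ) :
    Matrix.vecMul (Pi.single i 1) A = A i := by
  funext j
  simp [Matrix.vecMul, dotProduct, Pi.single_apply]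

/-- The designated inverse row. -/
noncomputable def rowInv (p : Fin N) (a : Fin N → ℂ) : Fin N → ℂ :=
  fun j => if j = p then (a p)⁻¹ else -(a j) / a p

lemma vecMul_rowRep_rowInv (p : Fin N) (a : Fin N → ℂ) (hp : a p ≠ 0) (x : Fin N → ℂ) :
    Matrix.vecMul (Matrix.vecMul x (rowRep p a)) (rowRep p (rowInv p a)) = x := by
  funext j
  simp only [vecMul_rowRep, rowInv]
  rcases eq_or_ne j p with h | h
  · subst h; field_simp; simp only [↓reduceIte, add_zero]; field_simp
  · simp only [if_neg h]
    field_simp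
    simp
    ring

lemma matrix_eq_one_of_vecMul (A : Matrix (Fin N) (Fin N) ℂ)
    (h : ∀ x, Matrix.vecMul x A = x) : A = 1 := by
  ext i j
  have := congrFun (h (Pi.single i 1)) j
  rw [single_one_vecMul'] at this
  rw [this, Matrix.one_apply, Pi.single_apply]
  simp [eq_comm]

lemma rowRep_mul_rowInv (p : Fin N) (a : Fin N → ℂ) (hp : a p ≠ 0) :
    rowRep p a * rowRep p (rowInv p a) = 1 := by
  apply matrix_eq_one_of_vecMul
  intro x
  rw [← Matrix.vecMul_vecMul, vecMul_rowRep_rowInv p a hp]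

lemma isUnit_rowRep (p : Fin N) (a : Fin N → ℂ) (hp : a p ≠ 0) : IsUnit (rowRep p a) :=
  IsUnit.of_mul_eq_one _ (rowRep_mul_rowInv p a hp)

lemma matrix_eq_of_vecMul (A B : Matrix (Fin N) (Fin N) ℂ)
    (h : ∀ x, Matrix.vecMul x A = Matrix.vecMul x B) : A = B := by
  ext i j
  have h1 := congrFun (h (Pi.single i 1)) j
  rwa [single_one_vecMul', single_one_vecMul'] at h1

lemma rowRep_comm_diagonal (d : Fin N → ℂ) (p : Fin N) (a : Fin N → ℂ)
    (h : ∀ j, a j ≠ 0 → d j = d p) :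
    rowRep p a * Matrix.diagonal d = Matrix.diagonal d * rowRep p a := by
  apply matrix_eq_of_vecMul
  intro x
  rw [← Matrix.vecMul_vecMul, ← Matrix.vecMul_vecMul]
  funext j
  rw [Matrix.vecMul_diagonal]
  simp only [vecMul_rowRep, Matrix.vecMul_diagonal]
  rcases eq_or_ne (a j) 0 with h2 | h2
  · rcases eq_or_ne j p with h3 | h3 <;> simp [h2, h3] <;> ring
  · have := h j h2
    rcases eq_or_ne j p with h3 | h3 <;> simp [h2, h3, this] <;> ring

/-- The orbit relation of the centralizer of `diagonal d` (together with scalars absorbed). -/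
def dRel (d : Fin N → ℂ) (v w : Fin N → ℂ) : Prop :=
  ∃ U : Matrix (Fin N) (Fin N) ℂ, IsUnit U ∧ U * Matrix.diagonal d = Matrix.diagonal d * U ∧
    w = Matrix.vecMul v U

lemma dRel_refl (d : Fin N → ℂ) (v : Fin N → ℂ) : dRel d v v :=
  ⟨1, isUnit_one, by simp, by simp⟩

lemma dRel_symm {d v w : Fin N → ℂ} (h : dRel d v w) : dRel d w v := by
  obtain ⟨U, hU, hcomm, rfl⟩ := h
  obtain ⟨u, rfl⟩ := hU
  refine ⟨(↑u⁻¹ : Matrix (Fin N) (Fin N) ℂ), u⁻¹.isUnit, ?_, ?_⟩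
  · calc (↑u⁻¹ : Matrix (Fin N) (Fin N) ℂ) * Matrix.diagonal d
        = ↑u⁻¹ * (Matrix.diagonal d * ↑u) * ↑u⁻¹ := by
          rw [mul_assoc ((↑u⁻¹ : Matrix (Fin N) (Fin N) ℂ)) _ _, mul_assoc, Units.mul_inv,
            mul_one]
      _ = ↑u⁻¹ * (↑u * Matrix.diagonal d) * ↑u⁻¹ := by rw [hcomm]
      _ = Matrix.diagonal d * ↑u⁻¹ := by
          rw [← mul_assoc, Units.inv_mul, one_mul]
  · rw [Matrix.vecMul_vecMul, Units.mul_inv, Matrix.vecMul_one]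

lemma dRel_trans {d u v w : Fin N → ℂ} (h1 : dRel d u v) (h2 : dRel d v w) : dRel d u w := by
  obtain ⟨U, hU, hc, rfl⟩ := h1
  obtain ⟨V, hV, hc2, rfl⟩ := h2
  refine ⟨U * V, hU.mul hV, ?_, ?_⟩
  · rw [mul_assoc, hc2, ← mul_assoc, hc, mul_assoc]
  · rw [Matrix.vecMul_vecMul]

/-- The set of eigenvalues on whose eigenspaces `v` has a nonzero component. -/
noncomputable def cset (d : Fin N → ℂ) (v : Fin N → ℂ) : Finset ℂ :=
  (Finset.univ.filter fun i => v i ≠ 0).image d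

lemma mem_cset {d v : Fin N → ℂ} {c : ℂ} : c ∈ cset d v ↔ ∃ i, v i ≠ 0 ∧ d i = c := by
  simp [cset, and_comm]

lemma cset_vecMul_subset {d : Fin N → ℂ} (U : Matrix (Fin N) (Fin N) ℂ)
    (hU : U * Matrix.diagonal d = Matrix.diagonal d * U) (v : Fin N → ℂ) :
    cset d (Matrix.vecMul v U) ⊆ cset d v := by
  intro c hc
  obtain ⟨j, hj, rfl⟩ := mem_cset.mp hc
  have hsum : ∑ i, v i * U i j ≠ 0 := hj
  obtain ⟨i, _, hi⟩ := Finset.exists_ne_zero_of_sum_ne_zero hsum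
  have hv : v i ≠ 0 := fun h => hi (by simp [h])
  have hUij : U i j ≠ 0 := fun h => hi (by simp [h])
  have hcm := congrFun (congrFun hU i) j
  rw [Matrix.mul_diagonal, Matrix.diagonal_mul] at hcm
  have : d i = d j := by
    apply mul_right_cancel₀ hUij
    rw [← hcm]; ring
  exact mem_cset.mpr ⟨i, hv, this⟩

lemma cset_smul {d : Fin N → ℂ} {y : ℂ} (hy : y ≠ 0) (v : Fin N → ℂ) :
    cset d (y • v) = cset d v := by
  ext c
  simp only [mem_cset, Pi.smul_apply, smul_eq_mul, mul_ne_zero_iff]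
  constructor
  · rintro ⟨i, ⟨_, h⟩, hd⟩; exact ⟨i, h, hd⟩
  · rintro ⟨i, h, hd⟩; exact ⟨i, ⟨hy, h⟩, hd⟩

lemma cset_dRel_eq {d v w : Fin N → ℂ} (h : dRel d v w) : cset d v = cset d w := by
  have h2 := dRel_symm h
  obtain ⟨U, hU, hc, hw⟩ := h
  obtain ⟨V, hV, hc2, hv⟩ := h2
  apply Finset.Subset.antisymm
  · conv_lhs => rw [hv]
    exact cset_vecMul_subset V hc2 w
  · conv_lhs => rw [hw]
    exact cset_vecMul_subset U hc v

/-- Single fiber normalization: replace the fiber of `p` by all-ones. -/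
lemma dRel_step {d : Fin N → ℂ} {v : Fin N → ℂ} (p : Fin N) (hp : v p ≠ 0) :
    dRel d v (fun j => if d j = d p then 1 else v j) := by
  set y : Fin N → ℂ := fun j => if d j = d p then (if j = p then 1 else 0) else v j with hy
  have step : ∀ a : Fin N → ℂ, (∀ j, a j ≠ 0 → d j = d p) → a p ≠ 0 →
      dRel d y (fun j => if d j = d p then a j else v j) := by
    intro a ha hap
    refine ⟨rowRep p a, isUnit_rowRep p a hap, rowRep_comm_diagonal d p a ha, ?_⟩
    funext j
    rw [vecMul_rowRep]
    have hyp : y p = 1 := by simp [hy]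
    rcases eq_or_ne j p with h | h
    · subst h; simp [hyp]
    · rcases eq_or_ne (d j) (d p) with h2 | h2
      · simp [hy, hyp, h, h2]
      · have : a j = 0 := by by_contra hc; exact h2 (ha j hc)
        simp [hy, hyp, h, h2, this]
  have h1 : dRel d y v := by
    have := step (fun j => if d j = d p then v j else 0) (fun j hj => by

      by_contra hc; simp [hc] at hj) (by simpa)
    convert this using 2 with j
    rcases eq_or_ne (d j) (d p) with h2 | h2 <;> simp [h2]
  have h2 : dRel d y (fun j => if d j = d p then 1 else v j) := by
    have := step (fun j => if d j = d p then 1 else 0) (fun j hj => by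
      by_contra hc; simp [hc] at hj) (by simp)
    convert this using 2 with j
    rcases eq_or_ne (d j) (d p) with h2 | h2 <;> simp [h2]
  exact dRel_trans (dRel_symm h1) h2

lemma cset_patch {d v : Fin N → ℂ} {lam : ℂ} (hl : lam ∈ cset d v) :
    cset d (fun j => if d j = lam then 1 else v j) = cset d v := by
  obtain ⟨p, hp, hdp⟩ := mem_cset.mp hl
  ext c
  simp only [mem_cset]
  constructor
  · rintro ⟨i, hi, rfl⟩
    rcases eq_or_ne (d i) lam with h | h
    · exact ⟨p, hp, by rw [hdp, h]⟩
    · refine ⟨i, ?_, rfl⟩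
      simpa [h] using hi
  · rintro ⟨i, hi, rfl⟩
    rcases eq_or_ne (d i) lam with h | h
    · exact ⟨p, by simp [hdp], by rw [hdp, h]⟩
    · exact ⟨i, by simp [h, hi], rfl⟩

lemma dRel_of_cset_eq_aux {d : Fin N → ℂ} (S : Finset ℂ) :
    ∀ v w : Fin N → ℂ, cset d v = cset d w → (∀ j, d j ∉ S → v j = w j) → dRel d v w := by
  induction S using Finset.induction_on with
  | empty =>
    intro v w _ h
    have : v = w := funext fun j => h j (by simp)
    rw [this]; exact dRel_refl d w
  | @insert lam S hlam ih =>
    intro v w hcs hout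
    by_cases hmem : lam ∈ cset d v
    · obtain ⟨p, hp, hdp⟩ := mem_cset.mp hmem
      have hmem' : lam ∈ cset d w := hcs ▸ hmem
      obtain ⟨q, hq, hdq⟩ := mem_cset.mp hmem'
      set v' : Fin N → ℂ := fun j => if d j = lam then 1 else v j with hv'
      set w' : Fin N → ℂ := fun j => if d j = lam then 1 else w j with hw'
      have h1 : dRel d v v' := by
        have := dRel_step (d := d) p hp
        rwa [hdp] at this
      have h2 : dRel d w w' := by
        have := dRel_step (d := d) q hq
        rwa [hdq] at this
      have h3 : dRel d v' w' := by
        apply ih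
        · rw [hv', hw', cset_patch hmem, cset_patch hmem', hcs]
        · intro j hj
          rcases eq_or_ne (d j) lam with h | h
          · simp [hv', hw', h]
          · have : d j ∉ insert lam S := by simp [h, hj]
            simp [hv', hw', h, hout j this]
      exact dRel_trans h1 (dRel_trans h3 (dRel_symm h2))
    · have hmem' : lam ∉ cset d w := hcs ▸ hmem
      apply ih v w hcs
      intro j hj
      rcases eq_or_ne (d j) lam with h | h
      · have hv0 : v j = 0 := by
          by_contra hc
          exact hmem (mem_cset.mpr ⟨j, hc, h⟩)
        have hw0 : w j = 0 := by
          by_contra hc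
          exact hmem' (mem_cset.mpr ⟨j, hc, h⟩)
        rw [hv0, hw0]
      · exact hout j (by simp [h, hj])

lemma dRel_of_cset_eq {d v w : Fin N → ℂ} (h : cset d v = cset d w) : dRel d v w :=
  dRel_of_cset_eq_aux (Finset.univ.image d) v w h
    (fun j hj => absurd (Finset.mem_image_of_mem d (Finset.mem_univ j)) hj)

lemma simRel_iff_cset (d : Fin N → ℂ) (hsq : (∑ i, d i ^ 2) ≠ 0)
    (hnot : ¬ ∃ U : GL (Fin N) ℂ,
      -(Matrix.diagonal d) = (U⁻¹).val * Matrix.diagonal d * U.val)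
    (v w : {v : Fin N → ℂ // v ≠ 0}) :
    simRel (Matrix.diagonal d) v w ↔ cset d v.val = cset d w.val := by
  constructor
  · rintro ⟨U, μ, x, hμ, hx, hD, hw⟩
    set Dd := Matrix.diagonal d with hDd
    -- square and take traces to find μ² = 1
    have hsq2 : Dd * Dd = ((μ:ℂ)^2) • ((U⁻¹).val * (Dd * Dd) * U.val) := by
      conv_lhs => rw [hD]
      rw [Matrix.smul_mul, Matrix.mul_smul, smul_smul, ← sq]
      congr 1
      calc (U⁻¹).val * Dd * U.val * ((U⁻¹).val * Dd * U.val)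
          = (U⁻¹).val * Dd * (U.val * (U⁻¹).val) * Dd * U.val := by
            simp only [mul_assoc]
        _ = (U⁻¹).val * (Dd * Dd) * U.val := by
            rw [Units.mul_inv]; simp only [mul_one, mul_assoc]
    have htr2 : Matrix.trace (Dd * Dd) = (μ:ℂ)^2 * Matrix.trace (Dd * Dd) := by
      conv_lhs => rw [hsq2]
      rw [Matrix.trace_smul, Matrix.trace_mul_cycle, ← mul_assoc, Units.mul_inv, one_mul]
      simp
    have htrval : Matrix.trace (Dd * Dd) = ∑ i, d i ^ 2 := by
      rw [hDd, Matrix.diagonal_mul_diagonal, Matrix.trace_diagonal]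
      simp [sq]
    have hμ2 : (μ:ℂ)^2 = 1 := by
      by_contra hc
      have := htr2
      rw [htrval] at this
      have h0 : (1 - (μ:ℂ)^2) * (∑ i, d i ^ 2) = 0 := by ring_nf; linear_combination this
      rcases mul_eq_zero.mp h0 with h | h
      · exact hc (by linear_combination -h)
      · exact hsq h
    have hμr : μ = 1 ∨ μ = -1 := by
      apply mul_self_eq_one_iff.mp
      have : ((μ * μ : ℝ) : ℂ) = 1 := by push_cast [← sq]; exact_mod_cast hμ2
      exact_mod_cast this
    rcases hμr with h1 | h1
    · -- μ = 1 : U commutes with Dd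
      subst h1
      simp only [Complex.ofReal_one, one_smul, one_mul] at hD hw
      have hcomm : U.val * Dd = Dd * U.val := by
        conv_lhs => rw [hD]
        rw [← mul_assoc, ← mul_assoc, Units.mul_inv, one_mul]
      have h1 : dRel d v.val (Matrix.vecMul v.val U.val) :=
        ⟨U.val, U.isUnit, hcomm, rfl⟩
      have h2 := cset_dRel_eq h1
      rw [hw, cset_smul hx, ← h2]
    · -- μ = -1 : contradiction with hnot
      exfalso
      apply hnot
      refine ⟨U, ?_⟩
      rw [h1] at hD
      simp only [Complex.ofReal_neg, Complex.ofReal_one, neg_smul, one_smul] at hD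
      nth_rewrite 1 [hD]
      rw [neg_neg]
  · intro h
    obtain ⟨Um, hU, hc, hw⟩ := dRel_of_cset_eq h
    refine ⟨hU.unit, 1, 1, one_ne_zero, one_ne_zero, ?_, ?_⟩
    · have hc' : hU.unit.val * Matrix.diagonal d = Matrix.diagonal d * hU.unit.val := by
        rw [hU.unit_spec]; exact hc
      rw [Complex.ofReal_one, one_smul]
      calc Matrix.diagonal d
          = (hU.unit⁻¹).val * (hU.unit.val * Matrix.diagonal d) := by
            rw [← mul_assoc, Units.inv_mul, one_mul]
        _ = (hU.unit⁻¹).val * Matrix.diagonal d * hU.unit.val := by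
            rw [hc', mul_assoc]
    · rw [Complex.ofReal_one, one_mul, one_smul, hU.unit_spec]
      exact hw

lemma card_quot_diag (d : Fin N → ℂ) (hsq : (∑ i, d i ^ 2) ≠ 0)
    (hnot : ¬ ∃ U : GL (Fin N) ℂ,
      -(Matrix.diagonal d) = (U⁻¹).val * Matrix.diagonal d * U.val) :
    Nat.card (Quot (simRel (Matrix.diagonal d)))
      = 2 ^ (Finset.univ.image d).card - 1 := by
  classical
  set T : Finset ℂ := Finset.univ.image d with hT
  have hmem : ∀ v : {v : Fin N → ℂ // v ≠ 0}, cset d v.val ∈ T.powerset.erase ∅ := by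
    intro v
    rw [Finset.mem_erase, Finset.mem_powerset]
    constructor
    · obtain ⟨i, hi⟩ := Function.ne_iff.mp v.prop
      exact Finset.ne_empty_of_mem (mem_cset.mpr ⟨i, by simpa using hi, rfl⟩)
    · exact Finset.Subset.trans (Finset.image_subset_image (Finset.filter_subset _ _))
        (by rw [hT])
  obtain ⟨f, hf⟩ : ∃ f : Quot (simRel (Matrix.diagonal d)) →
      {S : Finset ℂ // S ∈ T.powerset.erase ∅},
      ∀ a : {v : Fin N → ℂ // v ≠ 0}, (f (Quot.mk _ a)).val = cset d a.val :=
    ⟨Quot.lift (fun v => ⟨cset d v.val, hmem v⟩)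
      (fun a b h => Subtype.ext ((simRel_iff_cset d hsq hnot a b).mp h)),
      fun _ => rfl⟩
  have hbij : Function.Bijective f := by
    constructor
    · intro a b
      induction a using Quot.ind with | _ a =>
      induction b using Quot.ind with | _ b =>
      intro h
      apply Quot.sound
      have h2 := congrArg Subtype.val h
      rw [hf, hf] at h2
      exact (simRel_iff_cset d hsq hnot a b).mpr h2
    · rintro ⟨S, hS⟩
      rw [Finset.mem_erase, Finset.mem_powerset] at hS
      obtain ⟨hSne, hST⟩ := hS
      set v : Fin N → ℂ := fun i => if d i ∈ S then 1 else 0 with hv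
      obtain ⟨c, hc⟩ := Finset.nonempty_iff_ne_empty.mpr hSne
      obtain ⟨i, _, hi⟩ := Finset.mem_image.mp (hST hc)
      have hvne : v ≠ 0 := by
        intro h0
        have := congrFun h0 i
        simp [hv, hi, hc] at this
      refine ⟨Quot.mk _ ⟨v, hvne⟩, ?_⟩
      apply Subtype.ext
      rw [hf]
      show cset d v = S
      ext c'
      simp only [mem_cset]
      constructor
      · rintro ⟨j, hj, rfl⟩
        by_contra hc'
        simp [hv, hc'] at hj
      · intro hc'
        obtain ⟨j, _, hj⟩ := Finset.mem_image.mp (hST hc')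
        exact ⟨j, by simp [hv, hj, hc'], hj⟩
  rw [Nat.card_eq_of_bijective f hbij, Nat.card_eq_finsetCard,
    Finset.card_erase_of_mem (Finset.empty_mem_powerset T), Finset.card_powerset]

lemma simRel_conj (D : Matrix (Fin N) (Fin N) ℂ) (P : GL (Fin N) ℂ)
    (v w v' w' : {v : Fin N → ℂ // v ≠ 0})
    (hv : v'.val = Matrix.vecMul v.val P.val) (hw : w'.val = Matrix.vecMul w.val P.val)
    (h : simRel D v w) : simRel ((P⁻¹).val * D * P.val) v' w' := by
  obtain ⟨U, μ, x, hμ, hx, hD, hwrel⟩ := h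
  refine ⟨P⁻¹ * U * P, μ, x, hμ, hx, ?_, ?_⟩
  · have key : (((P⁻¹ * U * P)⁻¹).val : Matrix (Fin N) (Fin N) ℂ)
        * ((P⁻¹).val * D * P.val) * (P⁻¹ * U * P).val
        = (P⁻¹).val * ((U⁻¹).val * D * U.val) * P.val := by
      simp only [_root_.mul_inv_rev, inv_inv, Units.val_mul, mul_assoc,
        Units.mul_inv_cancel_left, Units.inv_mul_cancel_left]
    rw [key]
    conv_lhs => rw [hD]
    rw [Matrix.mul_smul, Matrix.smul_mul]
  · rw [hw, hwrel, hv]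
    simp only [Units.val_mul, Matrix.vecMul_vecMul, Matrix.smul_vecMul, mul_assoc,
      Units.mul_inv_cancel_left, Units.inv_mul_cancel_left]

/-- Multiplication by an invertible matrix as an equivalence of nonzero row vectors. -/
noncomputable def mulPequiv (P : GL (Fin N) ℂ) :
    {v : Fin N → ℂ // v ≠ 0} ≃ {v : Fin N → ℂ // v ≠ 0} where
  toFun v := ⟨Matrix.vecMul v.val P.val, by
    intro h0
    apply v.prop
    have := congrArg (fun y => Matrix.vecMul y (P⁻¹).val) h0
    simpa [Matrix.vecMul_vecMul, Units.mul_inv, Matrix.zero_vecMul,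
      -Matrix.coe_units_inv] using this⟩
  invFun v := ⟨Matrix.vecMul v.val (P⁻¹).val, by
    intro h0
    apply v.prop
    have := congrArg (fun y => Matrix.vecMul y P.val) h0
    simpa [Matrix.vecMul_vecMul, Units.inv_mul, Matrix.zero_vecMul,
      -Matrix.coe_units_inv] using this⟩
  left_inv v := by
    apply Subtype.ext
    simp [Matrix.vecMul_vecMul, Units.mul_inv, -Matrix.coe_units_inv]
  right_inv v := by
    apply Subtype.ext
    simp [Matrix.vecMul_vecMul, Units.inv_mul, -Matrix.coe_units_inv]

lemma card_quot_conj (D : Matrix (Fin N) (Fin N) ℂ) (P : GL (Fin N) ℂ) :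
    Nat.card (Quot (simRel D))
      = Nat.card (Quot (simRel ((P⁻¹).val * D * P.val))) := by
  apply Nat.card_eq_of_bijective (Quot.congr (mulPequiv P) ?_).toFun
    (Equiv.bijective _)
  intro a b
  constructor
  · intro h
    exact simRel_conj D P a b _ _ rfl rfl h
  · intro h
    have h2 := simRel_conj ((P⁻¹).val * D * P.val) P⁻¹ (mulPequiv P a) (mulPequiv P b) a b
      ?_ ?_ h
    · have e : ((P⁻¹)⁻¹).val * ((P⁻¹).val * D * P.val) * (P⁻¹).val = D := by
        simp only [inv_inv, mul_assoc, Units.mul_inv_cancel_left]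
        rw [Units.mul_inv, mul_one]
      rwa [e] at h2
    · show a.val = Matrix.vecMul (Matrix.vecMul a.val P.val) (P⁻¹).val
      simp [Matrix.vecMul_vecMul, Units.mul_inv, -Matrix.coe_units_inv]
    · show b.val = Matrix.vecMul (Matrix.vecMul b.val P.val) (P⁻¹).val
      simp [Matrix.vecMul_vecMul, Units.mul_inv, -Matrix.coe_units_inv]

lemma spectrum_conj (A : Matrix (Fin N) (Fin N) ℂ) (P : GL (Fin N) ℂ) :
    spectrum ℂ ((P⁻¹).val * A * P.val) = spectrum ℂ A := by
  ext z
  rw [spectrum.mem_iff, spectrum.mem_iff]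
  have e : algebraMap ℂ (Matrix (Fin N) (Fin N) ℂ) z - (P⁻¹).val * A * P.val
      = (P⁻¹).val * (algebraMap ℂ (Matrix (Fin N) (Fin N) ℂ) z - A) * P.val := by
    rw [mul_sub, sub_mul]
    congr 1
    simp only [Algebra.algebraMap_eq_smul_one, Matrix.mul_smul, Matrix.smul_mul, mul_one]
    rw [Units.inv_mul]
  rw [e, not_iff_not]
  rw [Units.isUnit_mul_units, Units.isUnit_units_mul]

set_option maxHeartbeats 1000000 in
/-- If `D` is a nonzero trace-free anti-hermitian matrix with exactly `k`
distinct eigenvalues which is not similar to `-D`, then `~_D` has exactly `2^k - 1`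
equivalence classes. -/
theorem stmt8 {N k : ℕ} (hN : 1 ≤ N) (D : Matrix (Fin N) (Fin N) ℂ)
    (hD0 : D ≠ 0) (htr : D.trace = 0) (hah : Dᴴ = -D)
    (hk : (spectrum ℂ D).ncard = k)
    (hnotsim : ¬ ∃ U : GL (Fin N) ℂ, -D = (U⁻¹).val * D * U.val) :
    Nat.card (Quot (simRel D)) = 2 ^ k - 1 := by
  classical
  -- `I • D` is hermitian
  have hH : (Complex.I • D).IsHermitian := by
    show (Complex.I • D)ᴴ = Complex.I • D
    rw [Matrix.conjTranspose_smul, hah]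
    simp [Complex.star_def, Complex.conj_I]
  set V : Matrix (Fin N) (Fin N) ℂ := (Matrix.IsHermitian.eigenvectorUnitary hH : Matrix (Fin N) (Fin N) ℂ) with hV
  have hVmem := (Matrix.IsHermitian.eigenvectorUnitary hH).2
  rw [Unitary.mem_iff] at hVmem
  set P : GL (Fin N) ℂ := ⟨V, star V, hVmem.2, hVmem.1⟩ with hP
  have hPval : P.val = V := rfl
  have hPinv : (P⁻¹).val = star V := rfl
  set d : Fin N → ℂ := fun i => (-Complex.I) * (hH.eigenvalues i : ℂ) with hd
  have hspec : Complex.I • D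
      = V * Matrix.diagonal ((fun a : ℝ => (a : ℂ)) ∘ hH.eigenvalues) * star V :=
    Matrix.IsHermitian.spectral_theorem hH
  have hDdiag : D = V * Matrix.diagonal d * star V := by
    have h1 : D = (-Complex.I) • (Complex.I • D) := by
      rw [smul_smul]
      norm_num [Complex.I_mul_I]
    rw [h1, hspec]
    have hdiagsmul : (-Complex.I) • Matrix.diagonal ((fun a : ℝ => (a : ℂ)) ∘ hH.eigenvalues)
        = Matrix.diagonal d := by
      ext i j
      rcases eq_or_ne i j with h | h
      · subst h; simp [Matrix.diagonal_apply_eq, hd]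
      · simp [Matrix.diagonal_apply_ne _ h, h]
    have h2 : V * Matrix.diagonal d * star V
        = (-Complex.I) • (V * Matrix.diagonal ((fun a : ℝ => (a : ℂ)) ∘ hH.eigenvalues)
          * star V) := by
      rw [← hdiagsmul, Matrix.mul_smul, Matrix.smul_mul]
    rw [h2]
  have hconj : (P⁻¹).val * D * P.val = Matrix.diagonal d := by
    rw [hPinv, hPval, hDdiag]
    calc star V * (V * Matrix.diagonal d * star V) * V
        = (star V * V) * Matrix.diagonal d * (star V * V) := by
          simp only [mul_assoc]
      _ = Matrix.diagonal d := by rw [hVmem.1, one_mul, mul_one]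
  have hD2 : D = P.val * Matrix.diagonal d * (P⁻¹).val := by
    rw [hDdiag, hPval, hPinv]
  -- the sum of squares of the diagonal entries is nonzero
  have hsq : (∑ i, d i ^ 2) ≠ 0 := by
    intro h0
    apply hD0
    have h1 : (∑ i, d i ^ 2) = -(((∑ i, (hH.eigenvalues i) ^ 2 : ℝ)) : ℂ) := by
      push_cast
      simp only [hd, mul_pow]
      rw [← Finset.sum_neg_distrib]
      apply Finset.sum_congr rfl
      intro i _
      have : (-Complex.I) ^ 2 = -1 := by
        rw [neg_pow, Complex.I_sq]; norm_num
      rw [this]; ring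
    rw [h1, neg_eq_zero] at h0
    have h2 : (∑ i, (hH.eigenvalues i) ^ 2 : ℝ) = 0 := by exact_mod_cast h0
    have hev : ∀ i, hH.eigenvalues i = 0 := by
      intro i
      have := (Finset.sum_eq_zero_iff_of_nonneg
        (fun i _ => sq_nonneg (hH.eigenvalues i))).mp h2 i (Finset.mem_univ i)
      exact pow_eq_zero_iff two_ne_zero |>.mp this
    have hdz : d = 0 := funext fun i => by simp [hd, hev i]
    rw [hDdiag, hdz]
    have hz : Matrix.diagonal (0 : Fin N → ℂ) = (0 : Matrix (Fin N) (Fin N) ℂ) := by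
      ext i j
      rcases eq_or_ne i j with h | h
      · subst h; simp
      · simp [Matrix.diagonal_apply_ne _ h]
    rw [hz, Matrix.mul_zero, Matrix.zero_mul]
  -- `diagonal d` is not similar to its negative
  have hnot' : ¬ ∃ W : GL (Fin N) ℂ,
      -(Matrix.diagonal d) = (W⁻¹).val * Matrix.diagonal d * W.val := by
    rintro ⟨W, hW⟩
    apply hnotsim
    refine ⟨P * W * P⁻¹, ?_⟩
    calc -D = -(P.val * Matrix.diagonal d * (P⁻¹).val) := by rw [← hD2]
      _ = P.val * (-(Matrix.diagonal d)) * (P⁻¹).val := by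
          rw [Matrix.mul_neg, Matrix.neg_mul]
      _ = P.val * ((W⁻¹).val * Matrix.diagonal d * W.val) * (P⁻¹).val := by rw [← hW]
      _ = P.val * ((W⁻¹).val * ((P⁻¹).val * D * P.val) * W.val) * (P⁻¹).val := by
          rw [hconj]
      _ = ((P * W * P⁻¹)⁻¹).val * D * (P * W * P⁻¹).val := by
          simp only [_root_.mul_inv_rev, inv_inv, Units.val_mul, mul_assoc]
  -- identify `k`
  have hkk : (Finset.univ.image d).card = k := by
    have h1 : spectrum ℂ (Matrix.diagonal d) = spectrum ℂ D := by
      rw [← hconj, spectrum_conj]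
    have h2 : Set.range d = ↑(Finset.univ.image d) := by
      rw [Finset.coe_image, Finset.coe_univ, Set.image_univ]
    rw [← hk, ← h1, spectrum_diagonal, h2, Set.ncard_coe_finset]
  rw [card_quot_conj D P, hconj, card_quot_diag d hsq hnot', hkk]
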